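/- The pile dominates the workload: let (α_k, σ_k, τ_k), k ≥ 0, be jobs with 1 ≤ α_k ≤ s, σ_k ≥ 0, τ_k ≥ 0. Let W_0 = 0, W_{k+1} = Φ_{α_k,σ_k,τ_k}(W_k) be the forward workload sequence and H_0 = 0, H_{k+1} = Ψ_{α_k,σ_k}(H_k) the pile sequence built from the same jobs with all inter-arrival times set to zero. Then for every n ≥ 0, W_n ≤ H_n coordinatewise. -/
import Mathlib


/-- The nondecreasing rearrangement operator `R` on vectors of ℝ^s. -/
noncomputable def sortVec {s : ℕ} (v : Fin s → ℝ) : Fin s → ℝ := v ∘ Tuple.sort v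

/-- The all-ones vector `U`. -/
def Uvec (s : ℕ) : Fin s → ℝ := fun _ => 1

/-- `L(α)`: coordinate `i` is `1` if `i ≤ α` and `0` otherwise (indices 0-based,
so `α : Fin s` represents the number of requested servers `α+1 ∈ {1,…,s}`). -/
def Lvec {s : ℕ} (α : Fin s) : Fin s → ℝ := fun i => if i ≤ α then 1 else 0

/-- `S(α, W)`: coordinate `i` is `max (W^α) (W^i)`. -/
def Svec {s : ℕ} (α : Fin s) (W : Fin s → ℝ) : Fin s → ℝ := fun i => max (W α) (W i)

/-- A vector is ordered if its coordinates are nondecreasing and nonnegative. -/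
def IsOrdered {s : ℕ} (W : Fin s → ℝ) : Prop := Monotone W ∧ ∀ i, 0 ≤ W i

/-- The one-step MJSRE map `Φ_{α,σ,τ}(W) = R(S(α,W) + σ·L(α) − τ·U)⁺`. -/
noncomputable def Phi {s : ℕ} (α : Fin s) (σ τ : ℝ) (W : Fin s → ℝ) : Fin s → ℝ :=
  sortVec (fun i => max (Svec α W i + σ * Lvec α i - τ * Uvec s i) 0)

/-- The one-step pile map `Ψ_{α,σ}(W) = R(S(α,W) + σ·L(α))`. -/
noncomputable def Psi {s : ℕ} (α : Fin s) (σ : ℝ) (W : Fin s → ℝ) : Fin s → ℝ :=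
  sortVec (fun i => Svec α W i + σ * Lvec α i)

/-- Forward workload sequence: `W 0 = 0`, `W (k+1) = Φ_{α_k,σ_k,τ_k}(W k)`. -/
noncomputable def forwardW {s : ℕ} (a : ℕ → Fin s) (σf τf : ℕ → ℝ) : ℕ → (Fin s → ℝ)
  | 0 => 0
  | k + 1 => Phi (a k) (σf k) (τf k) (forwardW a σf τf k)

/-- Pile sequence built from the same jobs with all inter-arrival times set to zero:
`H 0 = 0`, `H (k+1) = Ψ_{α_k,σ_k}(H k)`. -/
noncomputable def pileSeq {s : ℕ} (a : ℕ → Fin s) (σf : ℕ → ℝ) : ℕ → (Fin s → ℝ)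
  | 0 => 0
  | k + 1 => Psi (a k) (σf k) (pileSeq a σf k)

/-- Sorting is monotone: if `v ≤ w` pointwise, then the sorted vectors compare
pointwise as well. -/
lemma sortVec_mono {s : ℕ} {v w : Fin s → ℝ} (h : ∀ j, v j ≤ w j) (i : Fin s) :
    sortVec v i ≤ sortVec w i := by
  by_contra hlt
  push_neg at hlt
  set c := sortVec v i with hc
  have hAv : (Finset.univ.filter fun j => v j < c).card ≤ (i : ℕ) := by
    have himg : (Finset.univ.filter fun j => v j < c)
        = (Finset.univ.filter fun k => v (Tuple.sort v k) < c).image (Tuple.sort v) := by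
      ext j
      simp only [Finset.mem_filter, Finset.mem_image, Finset.mem_univ, true_and]
      constructor
      · intro hj
        exact ⟨(Tuple.sort v).symm j, by simpa using hj, by simp⟩
      · rintro ⟨k, hk, rfl⟩; exact hk
    rw [himg, Finset.card_image_of_injective _ (Tuple.sort v).injective]
    have hsub : (Finset.univ.filter fun k => v (Tuple.sort v k) < c) ⊆ Finset.Iio i := by
      intro k hk
      simp only [Finset.mem_filter] at hk
      simp only [Finset.mem_Iio]
      by_contra hik
      push_neg at hik
      have : c ≤ v (Tuple.sort v k) := Tuple.monotone_sort v hik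
      exact absurd this (not_le.2 hk.2)
    calc _ ≤ (Finset.Iio i).card := Finset.card_le_card hsub
      _ = (i : ℕ) := Fin.card_Iio i
  have hAw : (i : ℕ) + 1 ≤ (Finset.univ.filter fun j => w j < c).card := by
    have hsub : (Finset.Iic i).image (Tuple.sort w)
        ⊆ Finset.univ.filter fun j => w j < c := by
      intro j hj
      simp only [Finset.mem_image, Finset.mem_Iic] at hj
      obtain ⟨k, hk, rfl⟩ := hj
      simp only [Finset.mem_filter, Finset.mem_univ, true_and]
      exact lt_of_le_of_lt (Tuple.monotone_sort w hk) hlt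
    calc (i : ℕ) + 1 = (Finset.Iic i).card := (Fin.card_Iic i).symm
      _ = ((Finset.Iic i).image (Tuple.sort w)).card :=
        (Finset.card_image_of_injective _ (Tuple.sort w).injective).symm
      _ ≤ _ := Finset.card_le_card hsub
  have hsub : (Finset.univ.filter fun j => w j < c) ⊆ Finset.univ.filter fun j => v j < c := by
    intro j hj
    simp only [Finset.mem_filter, Finset.mem_univ, true_and] at hj ⊢
    exact lt_of_le_of_lt (h j) hj
  have := Finset.card_le_card hsub
  omega

/-- Sorting a nonnegative vector yields a nonnegative vector. -/
lemma sortVec_nonneg {s : ℕ} {v : Fin s → ℝ} (h : ∀ j, 0 ≤ v j) (i : Fin s) :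
    0 ≤ sortVec v i := h _

/-- The pile sequence is coordinatewise nonnegative. -/
lemma pileSeq_nonneg {s : ℕ} (a : ℕ → Fin s) (σf : ℕ → ℝ) (hσ : ∀ k, 0 ≤ σf k) :
    ∀ n i, 0 ≤ pileSeq a σf n i := by
  intro n
  induction n with
  | zero => intro i; simp [pileSeq]
  | succ k ih =>
    intro i
    show 0 ≤ Psi (a k) (σf k) (pileSeq a σf k) i
    unfold Psi
    refine sortVec_nonneg (fun j => ?_) i
    have h1 : 0 ≤ Svec (a k) (pileSeq a σf k) j := le_max_of_le_right (ih j)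
    have h2 : 0 ≤ σf k * Lvec (a k) j := by
      apply mul_nonneg (hσ k)
      unfold Lvec; positivity
    linarith

/-- The pile dominates the workload: `W_n ≤ H_n` coordinatewise for every `n`. -/
theorem forwardW_le_pileSeq (s : ℕ) (hs : 0 < s)
    (a : ℕ → Fin s) (σf τf : ℕ → ℝ) (hσ : ∀ k, 0 ≤ σf k) (hτ : ∀ k, 0 ≤ τf k) :
    ∀ n : ℕ, ∀ i, forwardW a σf τf n i ≤ pileSeq a σf n i := by
  intro n
  induction n with
  | zero => intro i; simp [forwardW, pileSeq]
  | succ k ih =>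
    intro i
    show Phi (a k) (σf k) (τf k) (forwardW a σf τf k) i ≤ Psi (a k) (σf k) (pileSeq a σf k) i
    unfold Phi Psi
    apply sortVec_mono
    intro j
    apply max_le
    · have hS : Svec (a k) (forwardW a σf τf k) j ≤ Svec (a k) (pileSeq a σf k) j :=
        max_le_max (ih _) (ih _)
      have hτ' : 0 ≤ τf k * Uvec s j := by
        simpa [Uvec] using hτ k
      linarith
    · have h1 : 0 ≤ Svec (a k) (pileSeq a σf k) j :=
        le_max_of_le_right (pileSeq_nonneg a σf hσ k j)
      have h2 : 0 ≤ σf k * Lvec (a k) j := by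
        apply mul_nonneg (hσ k)
        unfold Lvec; positivity
      linarith
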